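/- Let n be a positive integer, t0 ∈ ℝ, T ∈ (t0, ∞], and let U : [t0, T) → ℝ be differentiable with U'(t) = −ζ(U(t)) for all t ∈ [t0, T), where ζ(x) denotes the (real) value of the Riemann zeta function at the real point x. If U(t0) ∈ (−4n−2, −4n+2), then U(t) ∈ (−4n−2, −4n+2) for all t ∈ [t0, T); moreover, if T = ∞ then U(t) → −4n as t → ∞. -/

import Mathlib

noncomputable section

open Real Set Filter Topology

/-- The real value `ζ(x) = Re (riemannZeta x)` of the Riemann zeta function at a real point. -/
def zetaR (x : ℝ) : ℝ := (riemannZeta (x : ℂ)).re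

lemma zeta_real_pos {s : ℝ} (hs : 1 < s) : ∃ z : ℝ, 0 < z ∧ riemannZeta (s : ℂ) = (z : ℂ) := by
  have hre : 1 < (s : ℂ).re := by simpa using hs
  have hsum : Summable (fun n : ℕ => 1 / ((n : ℝ) + 1) ^ s) := by
    have := (summable_nat_add_iff (f := fun n : ℕ => 1 / (n : ℝ) ^ s) 1).mpr
      (Real.summable_one_div_nat_rpow.mpr hs)
    simpa using this
  refine ⟨∑' n : ℕ, 1 / ((n : ℝ) + 1) ^ s, ?_, ?_⟩
  · exact Summable.tsum_pos hsum (fun i => by positivity) 0 (by norm_num)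
  · rw [zeta_eq_tsum_one_div_nat_add_one_cpow hre, Complex.ofReal_tsum]
    congr 1; ext n
    rw [show ((n : ℂ) + 1) = (((n : ℝ) + 1 : ℝ) : ℂ) by push_cast; ring,
      ← Complex.ofReal_cpow (by positivity)]
    push_cast
    ring

lemma zetaR_factor {x : ℝ} (hx : x < 0) :
    ∃ c : ℝ, 0 < c ∧ zetaR x = c * Real.sin (π * x / 2) := by
  set s : ℝ := 1 - x with hs
  have hs1 : 1 < s := by simp [hs]; linarith
  obtain ⟨z, hz, hzeq⟩ := zeta_real_pos hs1
  have h1 : riemannZeta ((x : ℝ) : ℂ) =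
      2 * (2 * (π : ℂ)) ^ (-(s : ℂ)) * Complex.Gamma (s : ℂ) *
        Complex.cos ((π : ℝ) * (s : ℂ) / 2) * riemannZeta (s : ℂ) := by
    have := riemannZeta_one_sub (s := (s : ℂ))
      (fun n => by
        intro h
        have : s = -(n : ℝ) := by exact_mod_cast h
        have : (0:ℝ) ≤ (n:ℝ) := n.cast_nonneg
        linarith)
      (by
        intro h
        have : s = (1:ℝ) := by exact_mod_cast h
        linarith)
    rw [show (1 - (s : ℂ)) = ((x : ℝ) : ℂ) by push_cast [hs]; ring] at this
    exact this
  have h2 : (2 * (π : ℂ)) ^ (-(s : ℂ)) = (((2 * π) ^ (-s) : ℝ) : ℂ) := by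
    rw [Complex.ofReal_cpow (by positivity)]
    push_cast
    ring_nf
  have h3 : Complex.Gamma (s : ℂ) = ((Real.Gamma s : ℝ) : ℂ) := Complex.Gamma_ofReal s
  have h4 : Complex.cos ((π : ℝ) * (s : ℂ) / 2) = ((Real.cos (π * s / 2) : ℝ) : ℂ) := by
    rw [show ((π : ℝ) * (s : ℂ) / 2) = (((π * s / 2 : ℝ)) : ℂ) by push_cast; ring,
      ← Complex.ofReal_cos]
  have h5 : Real.cos (π * s / 2) = Real.sin (π * x / 2) := by
    rw [show π * s / 2 = π / 2 - π * x / 2 by rw [hs]; ring, Real.cos_pi_div_two_sub]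
  refine ⟨2 * (2 * π) ^ (-s) * Real.Gamma s * z, by
      have := Real.Gamma_pos_of_pos (by linarith : (0:ℝ) < s)
      positivity, ?_⟩
  unfold zetaR
  rw [h1, h2, h3, h4, h5, hzeq,
    show (2 : ℂ) = ((2:ℝ):ℂ) by norm_num,
    ← Complex.ofReal_mul, ← Complex.ofReal_mul, ← Complex.ofReal_mul, ← Complex.ofReal_mul,
    Complex.ofReal_re]
  ring

lemma sin_shift (n : ℕ) (x : ℝ) :
    Real.sin (π * x / 2) = Real.sin (π * (x + 4 * n) / 2) := by
  rw [show π * (x + 4 * n) / 2 = π * x / 2 + n * (2 * π) by ring,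
    Real.sin_add_nat_mul_two_pi]

lemma prod_pos (n : ℕ) (hn : 0 < n) {x : ℝ}
    (hx1 : -(4 * (n:ℝ)) - 2 < x) (hx2 : x < -(4 * (n:ℝ)) + 2) (hxa : x ≠ -(4 * (n:ℝ))) :
    0 < (x + 4 * n) * zetaR x := by
  have hn1 : (1:ℝ) ≤ n := by exact_mod_cast hn
  have hx0 : x < 0 := by linarith
  obtain ⟨c, hc, hceq⟩ := zetaR_factor hx0
  rw [hceq, sin_shift n x]
  set y : ℝ := x + 4 * n with hy
  have hy2 : -2 < y := by simp [hy]; linarith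
  have hy2' : y < 2 := by simp [hy]; linarith
  have hy0 : y ≠ 0 := fun h => hxa (by linarith [hy ▸ h.symm, h])
  rcases lt_or_gt_of_ne hy0 with h | h
  · have hsin : Real.sin (π * y / 2) < 0 := by
      apply Real.sin_neg_of_neg_of_neg_pi_lt
      · nlinarith [Real.pi_pos]
      · nlinarith [Real.pi_pos]
    calc (0:ℝ) < (-y) * (c * (-Real.sin (π * y / 2))) :=
      mul_pos (by linarith) (mul_pos hc (by linarith))
    _ = y * (c * Real.sin (π * y / 2)) := by ring
  · have hsin : 0 < Real.sin (π * y / 2) := by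
      apply Real.sin_pos_of_pos_of_lt_pi
      · nlinarith [Real.pi_pos]
      · nlinarith [Real.pi_pos]
    positivity

lemma zetaR_contAt {x : ℝ} (hx : x ≠ 1) : ContinuousAt zetaR x := by
  have h1 : ((x : ℂ)) ≠ 1 := by exact_mod_cast fun h => hx (by exact_mod_cast h)
  exact Complex.continuous_re.continuousAt.comp
    ((differentiableAt_riemannZeta h1).continuousAt.comp
      Complex.continuous_ofReal.continuousAt)


set_option maxHeartbeats 1000000 in
theorem stmt17 (n : ℕ) (hn : 0 < n) (t0 : ℝ) (T : EReal) (hT : (t0 : EReal) < T)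
    (U : ℝ → ℝ)
    (hU : ∀ t : ℝ, t0 ≤ t → (t : EReal) < T →
      HasDerivWithinAt U (-zetaR (U t)) {τ : ℝ | t0 ≤ τ ∧ (τ : EReal) < T} t)
    (h0 : U t0 ∈ Set.Ioo (-(4 * (n : ℝ)) - 2) (-(4 * (n : ℝ)) + 2)) :
    (∀ t : ℝ, t0 ≤ t → (t : EReal) < T →
      U t ∈ Set.Ioo (-(4 * (n : ℝ)) - 2) (-(4 * (n : ℝ)) + 2)) ∧
    (T = ⊤ → Filter.Tendsto U Filter.atTop (nhds (-(4 * (n : ℝ))))) := by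
  set a : ℝ := -(4 * (n : ℝ)) with ha
  set S : Set ℝ := {τ : ℝ | t0 ≤ τ ∧ (τ : EReal) < T} with hSdef
  have hn1 : (1:ℝ) ≤ n := by exact_mod_cast hn
  have ha0 : a + 2 ≤ -2 := by rw [ha]; linarith
  set r : ℝ := (|U t0 - a| + 2) / 2 with hrdef
  have h02 : |U t0 - a| < 2 := by
    rw [abs_lt]; obtain ⟨h1, h2⟩ := h0; constructor <;> [linarith; linarith]
  have hr1 : |U t0 - a| < r := by rw [hrdef]; have := abs_nonneg (U t0 - a); linarith
  have hr2 : r < 2 := by rw [hrdef]; linarith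
  have hr0 : 0 < r := by rw [hrdef]; have := abs_nonneg (U t0 - a); linarith
  -- sign facts
  have hsign : ∀ x : ℝ, |x - a| ≤ r → x ≠ a → 0 < (x - a) * zetaR x := by
    intro x hx hxa
    have h1 := abs_le.mp hx
    have := prod_pos n hn (x := x) (by rw [← ha]; linarith [h1.1]) (by rw [← ha]; linarith [h1.2])
      (by rw [← ha]; exact hxa)
    have hxa' : x + 4 * n = x - a := by rw [ha]; ring
    rwa [hxa'] at this
  have hsign0 : ∀ x : ℝ, |x - a| ≤ r → 0 ≤ (x - a) * zetaR x := by
    intro x hx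
    rcases eq_or_ne x a with h | h
    · simp [h]
    · exact (hsign x hx h).le
  -- key invariance
  have key : ∀ t ∈ S, |U t - a| ≤ r := by
    intro t ht
    have hsub : Icc t0 t ⊆ S := fun τ hτ =>
      ⟨hτ.1, lt_of_le_of_lt (EReal.coe_le_coe_iff.mpr hτ.2) ht.2⟩
    have hclosed : IsClosed ({τ : ℝ | |U τ - a| ≤ r} ∩ Icc t0 t) := by
      rw [Set.inter_comm]
      have : {τ : ℝ | |U τ - a| ≤ r} = U ⁻¹' {y : ℝ | |y - a| ≤ r} := rfl
      rw [this]
      refine ContinuousOn.preimage_isClosed_of_isClosed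
        (fun τ hτ => ((hU τ (hsub hτ).1 (hsub hτ).2).continuousWithinAt).mono hsub)
        isClosed_Icc ?_
      have : {y : ℝ | |y - a| ≤ r} = Icc (a - r) (a + r) := by
        ext y
        simp only [Set.mem_setOf_eq, Set.mem_Icc, abs_le]
        constructor <;> intro h <;> exact ⟨by linarith [h.1], by linarith [h.2]⟩
      rw [this]; exact isClosed_Icc
    have := IsClosed.Icc_subset_of_forall_exists_gt hclosed (le_of_lt hr1 : t0 ∈ _) ?_
    · exact this ⟨ht.1, le_rfl⟩
    intro x hx y hy
    have hxr : |U x - a| ≤ r := hx.1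
    have hxt0 := hx.2.1
    have hxt := hx.2.2
    have hxS : x ∈ S := hsub ⟨hxt0, le_of_lt hxt⟩
    set m : ℝ := min y t with hm
    have hxm : x < m := lt_min hy hxt
    have hIocS : Ioc x m ⊆ S := fun τ hτ =>
      hsub ⟨le_trans hxt0 hτ.1.le, le_trans hτ.2 (min_le_right y t)⟩
    have hF : 𝓝[Ioc x m] x ≤ 𝓝[S] x := nhdsWithin_mono x hIocS
    have hF' : 𝓝[Ioc x m] x ≤ 𝓝[S \ {x}] x :=
      nhdsWithin_mono x (fun τ hτ => ⟨hIocS hτ, fun h => absurd (h ▸ hτ.1) (lt_irrefl x)⟩)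
    haveI : (𝓝[Ioc x m] x).NeBot := left_nhdsWithin_Ioc_neBot hxm
    have htendU : Tendsto U (𝓝[Ioc x m] x) (𝓝 (U x)) :=
      ((hU x hxS.1 hxS.2).continuousWithinAt).mono_left hF
    have habs : Tendsto (fun τ => |U τ - a|) (𝓝[Ioc x m] x) (𝓝 |U x - a|) :=
      ((htendU.sub_const a).abs)
    rcases lt_or_eq_of_le hxr with hlt | heq
    · have ev : ∀ᶠ τ in 𝓝[Ioc x m] x, |U τ - a| ≤ r :=
        (habs.eventually_lt_const hlt).mono fun τ h => h.le
      obtain ⟨τ, hτ1, hτ2⟩ := (ev.and self_mem_nhdsWithin).exists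
      exact ⟨τ, hτ1, hτ2.1, le_trans hτ2.2 (min_le_left y t)⟩
    · -- |U x - a| = r
      have hslope : Tendsto (slope U x) (𝓝[Ioc x m] x) (𝓝 (-zetaR (U x))) :=
        (hasDerivWithinAt_iff_tendsto_slope.mp (hU x hxS.1 hxS.2)).mono_left hF'
      rcases (abs_eq hr0.le).mp heq with hUx | hUx
      · -- U x = a + r
        have hUne : U x ≠ a := by intro hc; rw [hc] at hUx; simp at hUx; linarith
        have hp := hsign (U x) heq.le hUne
        have hz : 0 < zetaR (U x) := by
          rcases mul_pos_iff.mp hp with ⟨h1, h2⟩ | ⟨h1, h2⟩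
          · exact h2
          · linarith
        have ev1 : ∀ᶠ τ in 𝓝[Ioc x m] x, slope U x τ < 0 :=
          hslope.eventually_lt_const (by linarith)
        have ev2 : ∀ᶠ τ in 𝓝[Ioc x m] x, a - r < U τ :=
          htendU.eventually_const_lt (by linarith)
        obtain ⟨τ, hτs, hτl, hτm⟩ := ((ev1.and ev2).and self_mem_nhdsWithin).exists
        refine ⟨τ, ?_, hτl, le_trans hτm (min_le_left y t)⟩
        have hτx : 0 < τ - x := by linarith
        have hUτ : U τ - U x < 0 := by
          have hs := hτs.1
          rw [slope_def_field, div_neg_iff] at hs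
          rcases hs with ⟨h1, h2⟩ | ⟨h1, h2⟩
          · linarith
          · exact h1
        have h2 := hτs.2
        rw [Set.mem_setOf_eq, abs_le]
        exact ⟨by linarith, by linarith⟩
      · -- U x = a - r
        have hUne : U x ≠ a := by intro hc; rw [hc] at hUx; simp at hUx; linarith
        have hp := hsign (U x) heq.le hUne
        have hz : zetaR (U x) < 0 := by
          rcases mul_pos_iff.mp hp with ⟨h1, h2⟩ | ⟨h1, h2⟩
          · linarith
          · exact h2
        have ev1 : ∀ᶠ τ in 𝓝[Ioc x m] x, 0 < slope U x τ :=
          hslope.eventually_const_lt (by linarith)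
        have ev2 : ∀ᶠ τ in 𝓝[Ioc x m] x, U τ < a + r :=
          htendU.eventually_lt_const (by linarith)
        obtain ⟨τ, hτs, hτl, hτm⟩ := ((ev1.and ev2).and self_mem_nhdsWithin).exists
        refine ⟨τ, ?_, hτl, le_trans hτm (min_le_left y t)⟩
        have hτx : 0 < τ - x := by linarith
        have hUτ : 0 < U τ - U x := by
          have hs := hτs.1
          rw [slope_def_field, div_pos_iff] at hs
          rcases hs with ⟨h1, h2⟩ | ⟨h1, h2⟩
          · linarith
          · linarith
        have h2 := hτs.2
        rw [Set.mem_setOf_eq, abs_le]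
        exact ⟨by linarith, by linarith⟩
  constructor
  · intro t ht1 ht2
    have h := abs_le.mp (key t ⟨ht1, ht2⟩)
    exact ⟨by linarith [h.1], by linarith [h.2]⟩
  · intro hTtop
    have hS : S = Ici t0 := by
      ext τ; simp [hSdef, hTtop, EReal.coe_lt_top, Set.mem_Ici]
    have hU' : ∀ t ∈ Ici t0, HasDerivWithinAt U (-zetaR (U t)) (Ici t0) t := by
      intro t ht
      have := hU t ht (hTtop ▸ EReal.coe_lt_top t)
      rwa [hS] at this
    have hkey : ∀ t ∈ Ici t0, |U t - a| ≤ r := by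
      intro t ht
      exact key t (by rw [hS]; exact ht)
    set V : ℝ → ℝ := fun t => (U t - a) ^ 2 with hVdef
    have hVd : ∀ t ∈ Ici t0, HasDerivWithinAt V
        (((2:ℕ):ℝ) * (U t - a) ^ 1 * (-zetaR (U t))) (Ici t0) t := by
      intro t ht
      exact ((hU' t ht).sub_const a).pow 2
    have hVcont : ContinuousOn V (Ici t0) := fun t ht => (hVd t ht).continuousWithinAt
    have hderivV : ∀ t ∈ interior (Ici t0),
        HasDerivAt V (((2:ℕ):ℝ) * (U t - a) ^ 1 * (-zetaR (U t))) t := by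
      intro t ht
      rw [interior_Ici] at ht
      exact (hVd t (Set.Ioi_subset_Ici_self ht)).hasDerivAt (Ici_mem_nhds ht)
    have hVanti : AntitoneOn V (Ici t0) := by
      refine antitoneOn_of_deriv_nonpos (convex_Ici t0) hVcont
        (fun t ht => (hderivV t ht).differentiableAt.differentiableWithinAt) ?_
      intro t ht
      rw [(hderivV t ht).deriv]
      have := hsign0 (U t) (hkey t (interior_subset ht))
      push_cast
      nlinarith
    have hV0 : Tendsto V atTop (𝓝 0) := by
      rw [tendsto_order]
      constructor
      · intro b hb
        exact Filter.Eventually.of_forall fun t => lt_of_lt_of_le hb (sq_nonneg _)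
      · intro b hb
        by_contra hcon
        push_neg at hcon
        have hall : ∀ t1 ≥ t0, b ≤ V t1 := by
          intro t1 ht1
          by_contra hco
          push_neg at hco
          have : ∀ᶠ t in atTop, V t < b := by
            rw [Filter.eventually_atTop]
            exact ⟨t1, fun t ht => lt_of_le_of_lt (hVanti ht1 (le_trans ht1 ht) ht) hco⟩
          exact hcon (this.mono fun t h => not_le.mpr h)
        -- compact set argument
        set K : Set ℝ := Icc (a - r) (a + r) ∩ {x : ℝ | b ≤ (x - a) ^ 2} with hKdef
        have hKc : IsCompact K :=
          isCompact_Icc.inter_right (isClosed_le continuous_const (by continuity))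
        have hKne : K.Nonempty := by
          refine ⟨U t0, ?_, hall t0 le_rfl⟩
          have := abs_le.mp (hkey t0 Set.self_mem_Ici)
          exact ⟨by linarith [this.1], by linarith [this.2]⟩
        have hKg : ContinuousOn (fun x => (x - a) * zetaR x) K := by
          intro x hx
          have hx1 : x ≠ 1 := by
            have := hx.1.2; intro h; rw [h] at this; linarith
          exact (((continuous_id.sub continuous_const).continuousAt).mul
            (zetaR_contAt hx1)).continuousWithinAt
        obtain ⟨x0, hx0K, hx0min⟩ := hKc.exists_isMinOn hKne hKg
        set c : ℝ := (x0 - a) * zetaR x0 with hcdef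
        have hc : 0 < c := by
          have hxane : x0 ≠ a := by
            intro h
            have := hx0K.2
            rw [h] at this
            simp at this
            linarith
          exact hsign x0 (abs_le.mpr ⟨by linarith [hx0K.1.1], by linarith [hx0K.1.2]⟩) hxane
        have hWanti : AntitoneOn (fun t => V t + c * t) (Ici t0) := by
          refine antitoneOn_of_deriv_nonpos (convex_Ici t0)
            (hVcont.add (continuous_const.mul continuous_id).continuousOn) ?_ ?_
          · intro t ht
            have hc' : HasDerivAt (fun x : ℝ => c * x) c t := by
              simpa using (hasDerivAt_id t).const_mul c
            exact ((hderivV t ht).add hc').differentiableAt.differentiableWithinAt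
          · intro t ht
            have hc' : HasDerivAt (fun x : ℝ => c * x) c t := by
              simpa using (hasDerivAt_id t).const_mul c
            have hD := (hderivV t ht).add hc'
            rw [show deriv (fun t => V t + c * t) t = (((2:ℕ):ℝ) * (U t - a) ^ 1 * (-zetaR (U t)) + c) from hD.deriv]
            have htI : t ∈ Ici t0 := interior_subset ht
            have hUK : U t ∈ K := by
              have := abs_le.mp (hkey t htI)
              exact ⟨⟨by linarith [this.1], by linarith [this.2]⟩, hall t htI⟩
            have := hx0min hUK
            simp only [Set.mem_setOf_eq] at this
            push_cast
            nlinarith [this]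
        -- contradiction
        set t2 : ℝ := t0 + (V t0 + 1) / c with ht2def
        have ht2 : t0 ≤ t2 := by
          rw [ht2def]
          have hV00 : (0:ℝ) ≤ V t0 := sq_nonneg _
          have : 0 ≤ (V t0 + 1) / c := div_nonneg (by linarith) hc.le
          linarith
        have hW : V t2 + c * t2 ≤ V t0 + c * t0 :=
          hWanti Set.self_mem_Ici (Set.mem_Ici.mpr ht2) ht2
        have hVt2 : b ≤ V t2 := hall t2 ht2
        have hct2 : c * t2 = c * t0 + (V t0 + 1) := by
          rw [ht2def, mul_add, mul_div_cancel₀ _ (ne_of_gt hc)]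
        linarith only [hW, hVt2, hct2, hb]
    -- conclude U → a
    have habs : Tendsto (fun t => |U t - a|) atTop (𝓝 0) := by
      have hsq : Tendsto (fun t => Real.sqrt (V t)) atTop (𝓝 0) := by
        have := (Real.continuous_sqrt.tendsto 0).comp hV0
        simpa [Function.comp_def] using this
      have : (fun t => Real.sqrt (V t)) = fun t => |U t - a| := by
        funext t
        rw [hVdef]
        exact Real.sqrt_sq_eq_abs _
      rwa [this] at hsq
    rw [tendsto_iff_dist_tendsto_zero]
    simpa [Real.dist_eq] using habs
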